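/- Let a,b,c,x,y be nonnegative integers with a ≤ c ≤ 2a, and let ε∈{0,1} have the parity of x+y+b. If the 'big' value condition m(x,y) = (x−y+b−ε)/2 + 1 ≠ 0 holds for the counting function m (counting (d,e,f) with 0≤d≤2a−c, 0≤e≤b, f≥0, d−e+f=x−b, e+f=y), then y ≥ b, 0 ≤ (−x+y+b+ε)/2, and 0 ≤ (−x+y+2a−b−c+ε−[c odd]−2ε[c even])/2, where [P] is 1 if P holds and 0 otherwise. -/
import Mathlib


/-- `mcount a b c x y`: number of integer triples `(d,e,f)` with `0 ≤ d ≤ 2a−c`,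
`0 ≤ e ≤ b`, `0 ≤ f`, `d − e + f = x − b`, `e + f = y`. -/
noncomputable def mcount (a b c x y : ℕ) : ℕ :=
  Set.ncard {t : ℤ × ℤ × ℤ |
    0 ≤ t.1 ∧ t.1 ≤ 2 * (a : ℤ) - c ∧ 0 ≤ t.2.1 ∧ t.2.1 ≤ (b : ℤ) ∧ 0 ≤ t.2.2 ∧
    t.1 - t.2.1 + t.2.2 = (x : ℤ) - b ∧ t.2.1 + t.2.2 = (y : ℤ)}

lemma mcount_key (a b c x y : ℕ) (ε δ : ℤ) (hε : ε = 0 ∨ ε = 1) (hδ : δ = 0 ∨ δ = 1)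
    (hpar : ((x : ℤ) + y + b + ε) % 2 = 0) (hδpar : ((c : ℤ) + ε + δ) % 2 = 0)
    (hm : (mcount a b c x y : ℤ) = ((x : ℤ) - y + b - ε) / 2 + 1)
    (hne : mcount a b c x y ≠ 0) :
    (b : ℤ) ≤ (y : ℤ) ∧ 0 ≤ -(x : ℤ) + y + b + ε ∧
      0 ≤ -(x : ℤ) + y + 2 * a - b - c - δ := by
  obtain ⟨l, hl⟩ : ∃ l : ℤ, 2 * l = (b : ℤ) + y - x + ε :=
    ⟨((b : ℤ) + y - x + ε) / 2, by omega⟩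
  obtain ⟨u, hu⟩ : ∃ u : ℤ, 2 * u = (b : ℤ) + y - x + 2 * a - c - δ :=
    ⟨((b : ℤ) + y - x + 2 * a - c - δ) / 2, by omega⟩
  have hinj : Function.Injective
      (fun e : ℤ => ((x : ℤ) - b - y + 2 * e, e, (y : ℤ) - e)) := by
    intro p q h
    simpa using congrArg (fun t : ℤ × ℤ × ℤ => t.2.1) h
  have hset : {t : ℤ × ℤ × ℤ |
      0 ≤ t.1 ∧ t.1 ≤ 2 * (a : ℤ) - c ∧ 0 ≤ t.2.1 ∧ t.2.1 ≤ (b : ℤ) ∧ 0 ≤ t.2.2 ∧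
      t.1 - t.2.1 + t.2.2 = (x : ℤ) - b ∧ t.2.1 + t.2.2 = (y : ℤ)} =
      (fun e : ℤ => ((x : ℤ) - b - y + 2 * e, e, (y : ℤ) - e)) ''
        (Set.Icc (max 0 l) (min (b : ℤ) (min (y : ℤ) u))) := by
    ext ⟨d, e, f⟩
    simp only [Set.mem_setOf_eq, Set.mem_image, Set.mem_Icc, max_le_iff, le_min_iff,
      Prod.mk.injEq]
    constructor
    · rintro ⟨h1, h2, h3, h4, h5, h6, h7⟩
      exact ⟨e, ⟨⟨by omega, by omega⟩, by omega, by omega, by omega⟩, by omega, rfl, by omega⟩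
    · rintro ⟨e', ⟨⟨he1, he2⟩, he3, he4, he5⟩, hd, rfl, hf⟩
      omega
  have hcard : mcount a b c x y = ((min (b : ℤ) (min (y : ℤ) u)) + 1 - max 0 l).toNat := by
    rw [mcount, hset, Set.ncard_image_of_injective _ hinj, ← Finset.coe_Icc,
      Set.ncard_coe_finset, Int.card_Icc]
  obtain ⟨M, hM1, hM2, hM3, hMdef⟩ :
      ∃ M : ℤ, M ≤ b ∧ M ≤ y ∧ M ≤ u ∧ min (b : ℤ) (min (y : ℤ) u) = M :=
    ⟨_, min_le_left _ _, le_trans (min_le_right _ _) (min_le_left _ _),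
      le_trans (min_le_right _ _) (min_le_right _ _), rfl⟩
  obtain ⟨L, hL1, hL2, hLdef⟩ : ∃ L : ℤ, 0 ≤ L ∧ l ≤ L ∧ max 0 l = L :=
    ⟨_, le_max_left _ _, le_max_right _ _, rfl⟩
  rw [hMdef, hLdef] at hcard
  omega

/-- If `ε ∈ {0,1}` has the parity of `x+y+b` and the counting function takes the 'big' value
`m(x,y) = (x−y+b−ε)/2 + 1 ≠ 0`, then `y ≥ b`, `0 ≤ (−x+y+b+ε)/2`, and
`0 ≤ (−x+y+2a−b−c+ε−[c odd]−2ε[c even])/2` (inequalities stated with even numerators). -/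
theorem mcount_big_value_consequences (a b c x y : ℕ) (h1 : a ≤ c) (h2 : c ≤ 2 * a)
    (ε : ℤ) (hε : ε = 0 ∨ ε = 1) (hpar : ((x : ℤ) + y + b + ε) % 2 = 0)
    (hm : (mcount a b c x y : ℤ) = ((x : ℤ) - y + b - ε) / 2 + 1)
    (hne : mcount a b c x y ≠ 0) :
    (b : ℤ) ≤ (y : ℤ) ∧
    0 ≤ -(x : ℤ) + y + b + ε ∧
    0 ≤ -(x : ℤ) + y + 2 * a - b - c + ε - (if Odd (c : ℤ) then 1 else 0)
        - 2 * ε * (if Even (c : ℤ) then 1 else 0) := by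
  rcases Int.even_or_odd (c : ℤ) with hc | hc
  · obtain ⟨k, hk⟩ := hc
    have h := mcount_key a b c x y ε ε hε hε hpar (by omega) hm hne
    have hEv : Even (c : ℤ) := ⟨k, hk⟩
    simp only [hEv, Int.not_odd_iff_even.mpr hEv, if_true, if_false, if_neg, if_pos,
      not_false_eq_true]
    refine ⟨h.1, h.2.1, ?_⟩
    have := h.2.2
    linarith
  · obtain ⟨k, hk⟩ := hc
    have h := mcount_key a b c x y ε (1 - ε)
      (by exact hε) (by rcases hε with h | h <;> simp [h]) hpar (by omega) hm hne
    have hOd : Odd (c : ℤ) := ⟨k, hk⟩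
    simp only [hOd, Int.not_even_iff_odd.mpr hOd, if_true, if_false, if_neg, if_pos,
      not_false_eq_true]
    refine ⟨h.1, h.2.1, ?_⟩
    have := h.2.2
    linarith
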